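/- Let P be a partition of a positive integer n and let a_1 < a_2 < … < a_r be positive integers with a_{i+1} ≥ a_i + 2 for 1 ≤ i < r. Then the cardinality of the r-U-chain U_{a_1,…,a_r} in D_P equals Σ_{i=1}^{r} [ (a_i − 2i + 2)·n_{a_i} + (a_i − 2i + 3)·n_{a_i+1} + 2·Σ_{p > a_i+1} n_p ]. -/

import Mathlib

/-!
Common definitions for the poset `D_P` attached to a partition `P` of `n`,
its `U`-chains, the quantity `s(P,a)` (cardinality of a simple `U`-chain),
and `U`-processes, following Khatami, "The poset of the nilpotent commutator
of a nilpotent matrix".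

A partition of `n` is encoded by its multiplicity function `np : ℕ →₀ ℕ`
(`np p` = number of parts equal to `p`), with `np 0 = 0` and `Σ p·np p = n`.
-/

/-- Vertices are triples `(u, p, k)`. -/
abbrev Vtx : Type := ℕ × ℕ × ℕ

/-- `np` is the multiplicity function of a partition of `n`. -/
def IsPartitionOf (n : ℕ) (np : ℕ →₀ ℕ) : Prop :=
  np 0 = 0 ∧ (np.sum fun p m => p * m) = n

/-- The vertex set of the diagram `D_P`: triples `(u,p,k)` with
`1 ≤ u ≤ p` and `1 ≤ k ≤ np p`. -/
def vertexSet (np : ℕ →₀ ℕ) : Set Vtx :=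
  {v | 1 ≤ v.1 ∧ v.1 ≤ v.2.1 ∧ 1 ≤ v.2.2 ∧ v.2.2 ≤ np v.2.1}

/-- The set `S_i` for the value `a`:
`S_i = {(u,p,k) : p ∈ {a, a+1}, i ≤ u ≤ p−i+1} ∪ {(u,p,k) : p > a+1, u ∈ {i, p−i+1}}`,
a subset of the vertex set of `D_P`.  (The condition `u ≤ p - i + 1` is written
as `u + i ≤ p + 1` to avoid truncated subtraction.) -/
def Sset (np : ℕ →₀ ℕ) (i a : ℕ) : Set Vtx :=
  {v ∈ vertexSet np |
    ((v.2.1 = a ∨ v.2.1 = a + 1) ∧ i ≤ v.1 ∧ v.1 + i ≤ v.2.1 + 1) ∨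
    (a + 1 < v.2.1 ∧ (v.1 = i ∨ v.1 + i = v.2.1 + 1))}

/-- The `r`-`U`-chain `U_{b 1, …, b r} = S_1 ∪ ⋯ ∪ S_r` in `D_P`. -/
def UChain (np : ℕ →₀ ℕ) (b : ℕ → ℕ) (r : ℕ) : Set Vtx :=
  ⋃ i ∈ Set.Icc 1 r, Sset np i (b i)

/-- `b 1 < b 2 < ⋯ < b r` are positive with consecutive differences at least `2`. -/
def ValidSeq (b : ℕ → ℕ) (r : ℕ) : Prop :=
  (∀ i, 1 ≤ i → i ≤ r → 1 ≤ b i) ∧ ∀ i, 1 ≤ i → i < r → b i + 2 ≤ b (i + 1)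

/-- `s(P,a) = a·n_a + (a+1)·n_{a+1} + 2·Σ_{p>a+1} n_p`, the cardinality of the
simple `U`-chain `U_a` in `D_P`. -/
def sVal (np : ℕ →₀ ℕ) (a : ℕ) : ℕ :=
  a * np a + (a + 1) * np (a + 1) +
    2 * ∑ p ∈ np.support.filter (fun p => a + 1 < p), np p

/-- `a` is optimal for `P`: `U_a` is a maximum simple `U`-chain in `D_P`. -/
def OptimalFor (np : ℕ →₀ ℕ) (a : ℕ) : Prop :=
  1 ≤ a ∧ ∀ c, 1 ≤ c → sVal np c ≤ sVal np a

/-- `p` is a part of the partition with multiplicity function `np`. -/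
def IsPart (np : ℕ →₀ ℕ) (p : ℕ) : Prop := 0 < p ∧ 0 < np p

/-- The covering relation of the poset `D_P`:  `Cov np x y` means `y` covers `x`.
(i)  for consecutive parts `q < p` and `1 ≤ u ≤ q`, `(u, p, np p)` is covered by `(u, q, 1)`;
(ii) for consecutive parts `p < q` and `1 ≤ u ≤ p`, `(u, p, np p)` is covered by
     `(u + q − p, q, 1)`;
(iii) for a part `p`, `1 ≤ u ≤ p`, `1 ≤ k < np p`, `(u,p,k)` is covered by `(u,p,k+1)`;
(iv) for an isolated part `p` (neither `p−1` nor `p+1` is a part) and `1 ≤ u < p`,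
     `(u, p, np p)` is covered by `(u+1, p, 1)`. -/
def Cov (np : ℕ →₀ ℕ) (x y : Vtx) : Prop :=
  (∃ p q u, IsPart np p ∧ IsPart np q ∧ q < p ∧
      (∀ t, q < t → t < p → ¬ IsPart np t) ∧
      1 ≤ u ∧ u ≤ q ∧ x = (u, p, np p) ∧ y = (u, q, 1)) ∨
  (∃ p q u, IsPart np p ∧ IsPart np q ∧ p < q ∧
      (∀ t, p < t → t < q → ¬ IsPart np t) ∧
      1 ≤ u ∧ u ≤ p ∧ x = (u, p, np p) ∧ y = (u + (q - p), q, 1)) ∨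
  (∃ p u k, IsPart np p ∧ 1 ≤ u ∧ u ≤ p ∧ 1 ≤ k ∧ k < np p ∧
      x = (u, p, k) ∧ y = (u, p, k + 1)) ∨
  (∃ p u, IsPart np p ∧ ¬ IsPart np (p - 1) ∧ ¬ IsPart np (p + 1) ∧
      1 ≤ u ∧ u < p ∧ x = (u, p, np p) ∧ y = (u + 1, p, 1))

/-- The partial order of `D_P`: reflexive–transitive closure of the covering relation. -/
def leD (np : ℕ →₀ ℕ) : Vtx → Vtx → Prop := Relation.ReflTransGen (Cov np)

/-- A chain in `D_P`: a subset of the vertex set that is totally ordered by `leD`. -/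
def IsChainD (np : ℕ →₀ ℕ) (C : Set Vtx) : Prop :=
  C ⊆ vertexSet np ∧ ∀ x ∈ C, ∀ y ∈ C, leD np x y ∨ leD np y x

/-- `u_r(P)`: the maximum cardinality of an `r`-`U`-chain in `D_P`. -/
noncomputable def uMax (np : ℕ →₀ ℕ) (r : ℕ) : ℕ :=
  sSup {m | ∃ b : ℕ → ℕ, ValidSeq b r ∧ (UChain np b r).ncard = m}

/-- The relabeling injection `ι : D_{P'} → D_P` attached to removing `U_a`. -/
def iotaMap (a : ℕ) (v : Vtx) : Vtx :=
  if v.2.1 < a then v else (v.1 + 1, v.2.1 + 2, v.2.2)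

/-- `iotaComp aa i = ι_1 ∘ ⋯ ∘ ι_i`, where `ι_j` is the relabeling map for `aa j`. -/
def iotaComp (aa : ℕ → ℕ) : ℕ → Vtx → Vtx
  | 0 => id
  | i + 1 => iotaComp aa i ∘ iotaMap (aa (i + 1))

/-- `(P_1, …, P_{r+1}; a_1, …, a_r)` is a `U`-process of length `r` for `P`:
`P_1 = P`, each `a_i` is optimal for `P_i`, and `P_{i+1}` is obtained from `P_i`
by deleting the parts equal to `a_i` or `a_i + 1` and decreasing by `2` every
part greater than `a_i + 1`. -/
def IsUProcess (r : ℕ) (np : ℕ →₀ ℕ) (Ps : ℕ → ℕ →₀ ℕ) (aa : ℕ → ℕ) : Prop :=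
  Ps 1 = np ∧
    ∀ i, 1 ≤ i → i ≤ r →
      OptimalFor (Ps i) (aa i) ∧
        ∀ m, Ps (i + 1) m = if m < aa i then Ps i m else Ps i (m + 2)

/-- The subset `C_i = (ι_1 ∘ ⋯ ∘ ι_{i−1})(U_{a_i}) ⊆ D_P` of a `U`-process. -/
def Cset (Ps : ℕ → ℕ →₀ ℕ) (aa : ℕ → ℕ) (i : ℕ) : Set Vtx :=
  iotaComp aa (i - 1) '' Sset (Ps i) 1 (aa i)


/-- Finset realization of `Sset np i a`. -/
def SF (np : ℕ →₀ ℕ) (i a : ℕ) : Finset Vtx :=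
  (Finset.Icc i (a + 1 - i)) ×ˢ ({a} ×ˢ Finset.Icc 1 (np a)) ∪
  (Finset.Icc i (a + 2 - i)) ×ˢ ({a + 1} ×ˢ Finset.Icc 1 (np (a + 1))) ∪
  (np.support.filter (fun p => a + 1 < p)).biUnion
    (fun p => ({i, p + 1 - i} : Finset ℕ) ×ˢ ({p} ×ˢ Finset.Icc 1 (np p)))

lemma Sset_eq_SF (np : ℕ →₀ ℕ) (i a : ℕ) (hi : 1 ≤ i) (hai : 2 * i ≤ a + 1) :
    Sset np i a = ↑(SF np i a) := by
  ext ⟨u, p, k⟩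
  simp only [Sset, vertexSet, Set.mem_setOf_eq, SF, Finset.coe_union, Set.mem_union,
    Finset.coe_biUnion, Set.mem_iUnion, Finset.mem_coe, Finset.mem_product,
    Finset.mem_singleton, Finset.mem_Icc, Finset.mem_insert, Finset.mem_filter,
    Finsupp.mem_support_iff, Finset.mem_biUnion]
  constructor
  · rintro ⟨⟨h1, h2, h3, h4⟩, hc⟩
    rcases hc with ⟨hp | hp, hu1, hu2⟩ | ⟨hp, hu⟩
    · subst hp; exact Or.inl (Or.inl ⟨⟨hu1, by omega⟩, rfl, h3, h4⟩)
    · subst hp; exact Or.inl (Or.inr ⟨⟨hu1, by omega⟩, rfl, h3, h4⟩)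
    · refine Or.inr ⟨p, ⟨by omega, hp⟩, ?_, rfl, h3, h4⟩
      rcases hu with h | h
      · exact Or.inl h
      · exact Or.inr (by omega)
  · rintro h
    rcases h with (⟨⟨hu1, hu2⟩, hp, hk1, hk2⟩ | ⟨⟨hu1, hu2⟩, hp, hk1, hk2⟩) | ⟨q, ⟨hq0, hq⟩, hu, hp, hk1, hk2⟩
    · subst hp; exact ⟨⟨by omega, by omega, hk1, hk2⟩, Or.inl ⟨Or.inl rfl, hu1, by omega⟩⟩
    · subst hp; exact ⟨⟨by omega, by omega, hk1, hk2⟩, Or.inl ⟨Or.inr rfl, hu1, by omega⟩⟩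
    · subst hp
      refine ⟨⟨by omega, by omega, hk1, hk2⟩, Or.inr ⟨hq, ?_⟩⟩
      rcases hu with h | h
      · exact Or.inl h
      · exact Or.inr (by omega)

lemma card_SF (np : ℕ →₀ ℕ) (i a : ℕ) (hi : 1 ≤ i) (hai : 2 * i ≤ a + 1) :
    (SF np i a).card =
      (a + 2 - 2 * i) * np a + (a + 3 - 2 * i) * np (a + 1) +
        2 * ∑ p ∈ np.support.filter (fun p => a + 1 < p), np p := by
  have hAB : Disjoint
      ((Finset.Icc i (a + 1 - i)) ×ˢ ({a} ×ˢ Finset.Icc 1 (np a)))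
      ((Finset.Icc i (a + 2 - i)) ×ˢ ({a + 1} ×ˢ Finset.Icc 1 (np (a + 1)))) := by
    rw [Finset.disjoint_left]
    rintro ⟨u, p, k⟩ h1 h2
    simp only [Finset.mem_product, Finset.mem_singleton, Finset.mem_Icc] at h1 h2
    omega
  have hABC : Disjoint
      ((Finset.Icc i (a + 1 - i)) ×ˢ ({a} ×ˢ Finset.Icc 1 (np a)) ∪
        (Finset.Icc i (a + 2 - i)) ×ˢ ({a + 1} ×ˢ Finset.Icc 1 (np (a + 1))))
      ((np.support.filter (fun p => a + 1 < p)).biUnion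
        (fun p => ({i, p + 1 - i} : Finset ℕ) ×ˢ ({p} ×ˢ Finset.Icc 1 (np p)))) := by
    rw [Finset.disjoint_left]
    rintro ⟨u, p, k⟩ h1 h2
    simp only [Finset.mem_union, Finset.mem_product, Finset.mem_singleton, Finset.mem_Icc,
      Finset.mem_biUnion, Finset.mem_filter, Finsupp.mem_support_iff,
      Finset.mem_insert] at h1 h2
    obtain ⟨q, ⟨_, hq⟩, _, hpq, _⟩ := h2
    omega
  rw [SF, Finset.card_union_of_disjoint hABC, Finset.card_union_of_disjoint hAB]
  have hA : ((Finset.Icc i (a + 1 - i)) ×ˢ ({a} ×ˢ Finset.Icc 1 (np a))).card =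
      (a + 2 - 2 * i) * np a := by
    rw [Finset.card_product, Finset.card_product, Finset.card_singleton,
      Nat.card_Icc, Nat.card_Icc]
    have h1 : a + 1 - i + 1 - i = a + 2 - 2 * i := by omega
    have h2 : 1 * (np a + 1 - 1) = np a := by omega
    rw [h1, h2]
  have hB : ((Finset.Icc i (a + 2 - i)) ×ˢ ({a + 1} ×ˢ Finset.Icc 1 (np (a + 1)))).card =
      (a + 3 - 2 * i) * np (a + 1) := by
    rw [Finset.card_product, Finset.card_product, Finset.card_singleton,
      Nat.card_Icc, Nat.card_Icc]
    have h1 : a + 2 - i + 1 - i = a + 3 - 2 * i := by omega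
    have h2 : 1 * (np (a + 1) + 1 - 1) = np (a + 1) := by omega
    rw [h1, h2]
  have hC : ((np.support.filter (fun p => a + 1 < p)).biUnion
      (fun p => ({i, p + 1 - i} : Finset ℕ) ×ˢ ({p} ×ˢ Finset.Icc 1 (np p)))).card =
      2 * ∑ p ∈ np.support.filter (fun p => a + 1 < p), np p := by
    rw [Finset.card_biUnion]
    · rw [Finset.mul_sum]
      refine Finset.sum_congr rfl fun q hq => ?_
      simp only [Finset.mem_filter, Finsupp.mem_support_iff] at hq
      rw [Finset.card_product, Finset.card_product, Finset.card_singleton,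
        Nat.card_Icc]
      have h2 : ({i, q + 1 - i} : Finset ℕ).card = 2 := by
        rw [Finset.card_insert_of_notMem, Finset.card_singleton]
        simp only [Finset.mem_singleton]
        omega
      rw [h2]
      omega
    · intro q hq q' hq' hne
      rw [Function.onFun, Finset.disjoint_left]
      rintro ⟨u, p, k⟩ h1 h2
      simp only [Finset.mem_product, Finset.mem_singleton] at h1 h2
      exact hne (h1.2.1 ▸ h2.2.1 ▸ rfl)
  rw [hA, hB, hC]

lemma SF_disjoint (np : ℕ →₀ ℕ) {i j ai aj : ℕ} (hi : 1 ≤ i) (hij : i < j)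
    (h2i : 2 * i ≤ ai + 1) (h2j : 2 * j ≤ aj + 1) (hstep : ai + 2 ≤ aj) :
    Disjoint (SF np i ai) (SF np j aj) := by
  rw [Finset.disjoint_left]
  rintro ⟨u, p, k⟩ h1 h2
  simp only [SF, Finset.mem_union, Finset.mem_product, Finset.mem_singleton,
    Finset.mem_Icc, Finset.mem_biUnion, Finset.mem_insert, Finset.mem_filter,
    Finsupp.mem_support_iff] at h1 h2
  obtain (⟨⟨_, _⟩, hp, _⟩ | ⟨⟨_, _⟩, hp, _⟩) | ⟨q, ⟨_, hq⟩, (hu | hu), hp, _⟩ := h1 <;>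
    obtain (⟨⟨_, _⟩, hp', _⟩ | ⟨⟨_, _⟩, hp', _⟩) | ⟨q', ⟨_, hq'⟩, (hu' | hu'), hp', _⟩ := h2 <;>
    omega

lemma validSeq_chain {a : ℕ → ℕ} {r : ℕ} (ha : ValidSeq a r) :
    ∀ j, 1 ≤ j → j ≤ r → ∀ i, 1 ≤ i → i ≤ j → a i + 2 * (j - i) ≤ a j := by
  intro j
  induction j with
  | zero => omega
  | succ m ih =>
    intro h1 h2 i hi1 hi2
    rcases Nat.lt_or_ge i (m + 1) with h | h
    · have hm1 : 1 ≤ m := by omega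
      have := ih hm1 (by omega) i hi1 (by omega)
      have := ha.2 m hm1 (by omega)
      omega
    · have : i = m + 1 := by omega
      subst this; omega

/-- `|U_{a_1,…,a_r}| = Σ_{i=1}^r ((a_i − 2i + 2)·n_{a_i}
+ (a_i − 2i + 3)·n_{a_i+1} + 2·Σ_{p>a_i+1} n_p)`. -/
theorem card_UChain
    (n : ℕ) (hn : 0 < n) (np : ℕ →₀ ℕ) (hP : IsPartitionOf n np)
    (r : ℕ) (hr : 1 ≤ r) (a : ℕ → ℕ) (ha : ValidSeq a r) :
    (UChain np a r).ncard =
      ∑ i ∈ Finset.Icc 1 r,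
        ((a i + 2 - 2 * i) * np (a i) + (a i + 3 - 2 * i) * np (a i + 1) +
          2 * ∑ p ∈ np.support.filter (fun p => a i + 1 < p), np p) := by
  have hchain := validSeq_chain ha
  have hlow : ∀ i, 1 ≤ i → i ≤ r → 2 * i ≤ a i + 1 := by
    intro i h1 h2
    have := hchain i h1 h2 1 le_rfl h1
    have := ha.1 1 le_rfl (le_trans h1 h2)
    omega
  have hU : UChain np a r = ↑((Finset.Icc 1 r).biUnion fun i => SF np i (a i)) := by
    rw [UChain, Finset.coe_biUnion, show (Set.Icc 1 r) = ↑(Finset.Icc 1 r) from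
      (Finset.coe_Icc 1 r).symm]
    refine Set.iUnion₂_congr fun i hi => ?_
    rw [Finset.mem_coe, Finset.mem_Icc] at hi
    exact Sset_eq_SF np i (a i) hi.1 (hlow i hi.1 hi.2)
  rw [hU, Set.ncard_coe_finset, Finset.card_biUnion]
  · refine Finset.sum_congr rfl fun i hi => ?_
    rw [Finset.mem_Icc] at hi
    exact card_SF np i (a i) hi.1 (hlow i hi.1 hi.2)
  · intro i hi j hj hne
    rw [Finset.mem_coe, Finset.mem_Icc] at hi hj
    rcases Nat.lt_or_ge i j with h | h
    · have hs : a i + 2 ≤ a j := by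
        have := hchain j hj.1 hj.2 i hi.1 (le_of_lt h)
        omega
      exact SF_disjoint np hi.1 h (hlow i hi.1 hi.2) (hlow j hj.1 hj.2) hs
    · have hji : j < i := by omega
      have hs : a j + 2 ≤ a i := by
        have := hchain i hi.1 hi.2 j hj.1 (le_of_lt hji)
        omega
      exact (SF_disjoint np hj.1 hji (hlow j hj.1 hj.2) (hlow i hi.1 hi.2) hs).symm
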